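/- Let c ∈ C and suppose the revision protocol ρ^c is excess payoff or pairwise comparison. Let μ ∈ X be such that Σ_{s∈S^c} f^{c,r}_{s,u}(μ) = 0 for every u ∈ U^c. Then for every u ∈ U^c with μ^c[S^c,u] > 0, one has F^c_u(μ) ≥ F^c_v(μ) for all v ∈ U^c. -/
import Mathlib


open Finset

variable {C : Type*} {S U : C → Type*}

/-- Membership in the state-policy distribution space `X`. -/
def MemX [∀ c, Fintype (S c)] [∀ c, Fintype (U c)]
    (m : C → ℝ) (μ : (c : C) → S c → U c → ℝ) : Prop :=
  ∀ c, (∀ s u, 0 ≤ μ c s u) ∧ (∑ s, ∑ u, μ c s u) = m c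

/-- Mixed stationary Nash equilibrium: every policy with positive mass is payoff maximizing,
and the state distribution of each policy is the stationary one. -/
def IsMSNE [∀ c, Fintype (S c)]
    (F : (c : C) → ((c' : C) → S c' → U c' → ℝ) → U c → ℝ)
    (η : (c : C) → U c → S c → ℝ)
    (μ : (c : C) → S c → U c → ℝ) : Prop :=
  ∀ (c : C) (u : U c),
    ((0 < ∑ s, μ c s u) → ∀ v, F c μ v ≤ F c μ u) ∧
    (∀ s, μ c s u = η c u s * ∑ s', μ c s' u)

/-- The simplex `Δ` of policy-mass vectors of total mass `mc`. -/
def simplexSet {V : Type*} [Fintype V] (mc : ℝ) : Set (V → ℝ) :=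
  {σ | (∀ v, 0 ≤ σ v) ∧ (∑ v, σ v) = mc}

/-- The dynamic (state-transition) flow `f^{c,d}_{s,u}(μ)`. -/
def fdFlow [∀ c, Fintype (S c)]
    (lam : C → ℝ) (φ : (c : C) → U c → Matrix (S c) (S c) ℝ)
    (μ : (c : C) → S c → U c → ℝ) (c : C) (s : S c) (u : U c) : ℝ :=
  lam c * ((∑ s', φ c u s s' * μ c s' u) - μ c s u)

/-- The revision flow `f^{c,r}_{s,u}(μ)`. -/
def frFlow [∀ c, Fintype (S c)] [∀ c, Fintype (U c)]
    (F : (c : C) → ((c' : C) → S c' → U c' → ℝ) → U c → ℝ)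
    (ρ : (c : C) → (U c → ℝ) → (U c → ℝ) → U c → U c → ℝ)
    (μ : (c : C) → S c → U c → ℝ) (c : C) (s : S c) (u : U c) : ℝ :=
  (∑ u', μ c s u' * ρ c (F c μ) (fun v => ∑ s', μ c s' v) u' u)
    - μ c s u * ∑ u', ρ c (F c μ) (fun v => ∑ s', μ c s' v) u u'

/-- Imitative revision protocol. -/
def IsImitative {V : Type*} [Fintype V] (mc : ℝ)
    (ρ : (V → ℝ) → (V → ℝ) → V → V → ℝ) : Prop :=
  ∃ r : (V → ℝ) → (V → ℝ) → V → V → ℝ,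
    (∃ K, LipschitzOnWith K (fun p : (V → ℝ) × (V → ℝ) => r p.1 p.2)
        (Set.univ ×ˢ simplexSet mc)) ∧
    (∀ F σ, σ ∈ simplexSet (V := V) mc → ∀ u v, 0 ≤ r F σ u v) ∧
    (∀ F σ, σ ∈ simplexSet (V := V) mc → ∀ u v k : V,
        (F u ≤ F v ↔ r F σ k u - r F σ u k ≤ r F σ k v - r F σ v k)) ∧
    (∀ F σ, σ ∈ simplexSet (V := V) mc → ∀ u v, ρ F σ u v = r F σ u v * σ v / mc)

/-- Imitative-via-comparison revision protocol: imitative with sign-preserving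
conditional imitation rates. -/
def IsImitativeViaComparison {V : Type*} [Fintype V] (mc : ℝ)
    (ρ : (V → ℝ) → (V → ℝ) → V → V → ℝ) : Prop :=
  ∃ r : (V → ℝ) → (V → ℝ) → V → V → ℝ,
    (∃ K, LipschitzOnWith K (fun p : (V → ℝ) × (V → ℝ) => r p.1 p.2)
        (Set.univ ×ˢ simplexSet mc)) ∧
    (∀ F σ, σ ∈ simplexSet (V := V) mc → ∀ u v, 0 ≤ r F σ u v) ∧
    (∀ F σ, σ ∈ simplexSet (V := V) mc → ∀ u v k : V,
        (F u ≤ F v ↔ r F σ k u - r F σ u k ≤ r F σ k v - r F σ v k)) ∧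
    (∀ F σ, σ ∈ simplexSet (V := V) mc → ∀ u v,
        Real.sign (r F σ u v) = Real.sign (max 0 (F v - F u))) ∧
    (∀ F σ, σ ∈ simplexSet (V := V) mc → ∀ u v, ρ F σ u v = r F σ u v * σ v / mc)

/-- Excess payoff revision protocol. -/
def IsExcessPayoff {V : Type*} [Fintype V] (mc : ℝ)
    (ρ : (V → ℝ) → (V → ℝ) → V → V → ℝ) : Prop :=
  ∃ τ : (V → ℝ) → V → ℝ,
    (∃ K, LipschitzWith K τ) ∧
    (∀ F v, 0 ≤ τ F v) ∧
    (∀ Fhat : V → ℝ, (∃ v, 0 < Fhat v) → 0 < ∑ v, τ Fhat v * Fhat v) ∧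
    (∀ F σ, σ ∈ simplexSet (V := V) mc → ∀ u v,
        ρ F σ u v = τ (fun w => F w - (∑ w', F w' * σ w') / mc) v)

/-- Pairwise comparison revision protocol. -/
def IsPairwiseComparison {V : Type*} [Fintype V] (mc : ℝ)
    (ρ : (V → ℝ) → (V → ℝ) → V → V → ℝ) : Prop :=
  ∃ τ : (V → ℝ) → V → V → ℝ,
    (∃ K, LipschitzWith K τ) ∧
    (∀ F u v, 0 ≤ τ F u v) ∧
    (∀ F (u v : V), Real.sign (τ F u v) = Real.sign (max 0 (F v - F u))) ∧
    (∀ F σ, σ ∈ simplexSet (V := V) mc → ∀ u v, ρ F σ u v = τ F u v)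

/-- Fix a class `c` whose revision protocol is excess payoff or pairwise
comparison. If at `μ ∈ X` the aggregate revision flow of every policy of class `c` vanishes,
then every policy of class `c` with positive mass is payoff maximizing. -/
theorem stmt15 [Fintype C] [Nonempty C]
    [∀ c, Fintype (S c)] [∀ c, Nonempty (S c)]
    [∀ c, Fintype (U c)] [∀ c, Nonempty (U c)]
    (m : C → ℝ) (hm : ∀ c, 0 < m c)
    (F : (c : C) → ((c' : C) → S c' → U c' → ℝ) → U c → ℝ)
    (ρ : (c : C) → (U c → ℝ) → (U c → ℝ) → U c → U c → ℝ)
    (hρ0 : ∀ c F' σ, σ ∈ simplexSet (m c) → ∀ u v, 0 ≤ ρ c F' σ u v)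
    (c : C)
    (hρc : IsExcessPayoff (m c) (ρ c) ∨ IsPairwiseComparison (m c) (ρ c))
    (μ : (c : C) → S c → U c → ℝ) (hμX : MemX m μ)
    (hzero : ∀ u : U c, ∑ s, frFlow F ρ μ c s u = 0) :
    ∀ u : U c, (0 < ∑ s, μ c s u) → ∀ v, F c μ v ≤ F c μ u := by
  classical
  set σ : U c → ℝ := fun w => ∑ s, μ c s w with hσdef
  have hσ0 : ∀ w, 0 ≤ σ w := fun w => Finset.sum_nonneg fun s _ => (hμX c).1 s w
  have hσsum : ∑ w, σ w = m c := by
    rw [← (hμX c).2, Finset.sum_comm]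
  have hσmem : σ ∈ simplexSet (m c) := ⟨hσ0, hσsum⟩
  have hagg : ∀ w : U c,
      ∑ w', σ w' * ρ c (F c μ) σ w' w = σ w * ∑ w', ρ c (F c μ) σ w w' := by
    intro w
    have h := hzero w
    simp only [frFlow, Finset.sum_sub_distrib] at h
    rw [Finset.sum_comm] at h
    simp only [← Finset.sum_mul] at h
    have : (∑ w', σ w' * ρ c (F c μ) σ w' w) - σ w * ∑ w', ρ c (F c μ) σ w w' = 0 := h
    linarith
  intro u hu v
  have hσu : 0 < σ u := hu
  rcases hρc with ⟨τ, _, hτ0, hacute, hform⟩ | ⟨τ, _, hτ0, hsign, hform⟩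
  · -- excess payoff case
    set Fhat : U c → ℝ := fun w => F c μ w - (∑ w', F c μ w' * σ w') / m c with hFh
    have hτform : ∀ w : U c, m c * τ Fhat w = σ w * ∑ w', τ Fhat w' := by
      intro w
      have h := hagg w
      simp only [hform (F c μ) σ hσmem] at h
      rw [← Finset.sum_mul, hσsum] at h
      exact h
    have hσFhat : ∑ w, σ w * Fhat w = 0 := by
      simp only [hFh, mul_sub, Finset.sum_sub_distrib, ← Finset.sum_mul]
      rw [hσsum]
      have : (∑ w, σ w * F c μ w) = ∑ w', F c μ w' * σ w' := by
        exact Finset.sum_congr rfl fun w _ => mul_comm _ _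
      rw [this, mul_div_cancel₀ _ (hm c).ne', sub_self]
    have hτFhat : ∑ w, τ Fhat w * Fhat w = 0 := by
      have hmc := (hm c).ne'
      have : ∀ w, τ Fhat w = σ w * (∑ w', τ Fhat w') / m c := by
        intro w
        have := hτform w
        field_simp
        linarith
      calc ∑ w, τ Fhat w * Fhat w
          = ∑ w, (σ w * (∑ w', τ Fhat w') / m c) * Fhat w := by
            exact Finset.sum_congr rfl fun w _ => by rw [this w]
        _ = ((∑ w', τ Fhat w') / m c) * ∑ w, σ w * Fhat w := by
            rw [Finset.mul_sum]; exact Finset.sum_congr rfl fun w _ => by ring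
        _ = 0 := by rw [hσFhat, mul_zero]
    have hnopos : ∀ w, Fhat w ≤ 0 := by
      by_contra hcon
      push_neg at hcon
      obtain ⟨w, hw⟩ := hcon
      have := hacute Fhat ⟨w, hw⟩
      rw [hτFhat] at this
      exact lt_irrefl 0 this
    have hall0 : ∀ w ∈ Finset.univ, σ w * Fhat w = 0 := by
      intro w _
      have h1 : ∀ w ∈ (Finset.univ : Finset (U c)), 0 ≤ -(σ w * Fhat w) := by
        intro w _
        have := mul_nonpos_of_nonneg_of_nonpos (hσ0 w) (hnopos w)
        linarith
      have h2 : ∑ w, -(σ w * Fhat w) = 0 := by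
        rw [Finset.sum_neg_distrib, hσFhat, neg_zero]
      have := (Finset.sum_eq_zero_iff_of_nonneg h1).mp h2 w (Finset.mem_univ w)
      linarith
    have hFu : Fhat u = 0 := by
      have := hall0 u (Finset.mem_univ u)
      rcases mul_eq_zero.mp this with h | h
      · exact absurd h hσu.ne'
      · exact h
    have := hnopos v
    simp only [hFh] at hFu this
    linarith
  · -- pairwise comparison case
    by_contra hvu
    push_neg at hvu
    have hρform : ∀ u' v', ρ c (F c μ) σ u' v' = τ (F c μ) u' v' :=
      hform (F c μ) σ hσmem
    set supp : Finset (U c) := Finset.univ.filter (fun w => 0 < σ w) with hsupp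
    have husupp : u ∈ supp := Finset.mem_filter.mpr ⟨Finset.mem_univ u, hσu⟩
    obtain ⟨a, hamem, hamin⟩ := Finset.exists_min_image supp (F c μ) ⟨u, husupp⟩
    have hσa : 0 < σ a := (Finset.mem_filter.mp hamem).2
    have hFaFu : F c μ a ≤ F c μ u := hamin u husupp
    have hFaFv : F c μ a < F c μ v := lt_of_le_of_lt hFaFu hvu
    have hLHS : ∑ w', σ w' * ρ c (F c μ) σ w' a = 0 := by
      apply Finset.sum_eq_zero
      intro w' _
      rcases eq_or_lt_of_le (hσ0 w') with h | h
      · rw [← h, zero_mul]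
      · have hw'supp : w' ∈ supp := Finset.mem_filter.mpr ⟨Finset.mem_univ w', h⟩
        have hle : F c μ a ≤ F c μ w' := hamin w' hw'supp
        have hmax : max 0 (F c μ a - F c μ w') = 0 := max_eq_left (by linarith)
        have := hsign (F c μ) w' a
        rw [hmax, Real.sign_zero, Real.sign_eq_zero_iff] at this
        rw [hρform w' a, this, mul_zero]
    have h0 : σ a * ∑ w', ρ c (F c μ) σ a w' = 0 := by rw [← hagg a, hLHS]
    have hsum0 : ∑ w', ρ c (F c μ) σ a w' = 0 := by
      rcases mul_eq_zero.mp h0 with h | h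
      · exact absurd h hσa.ne'
      · exact h
    have hτav : ρ c (F c μ) σ a v = 0 := by
      have := (Finset.sum_eq_zero_iff_of_nonneg
        (fun w' _ => by rw [hρform a w']; exact hτ0 (F c μ) a w')).mp hsum0 v
        (Finset.mem_univ v)
      exact this
    have hpos : (0:ℝ) < max 0 (F c μ v - F c μ a) := lt_max_of_lt_right (by linarith)
    have := hsign (F c μ) a v
    rw [Real.sign_of_pos hpos, ← hρform a v, hτav, Real.sign_zero] at this
    norm_num at this
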